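/- For every $z \in \mathbb{C}^4$, $\|z\|_{\mathsf{X}} \ge \sum_{j=1}^4 |z_j| - 2\min_j |z_j|$. -/

import Mathlib

open Complex Real

noncomputable def Xfun (z : Fin 4 → ℂ) (σ : ℝ) : ℝ :=
  ‖z 0 * Complex.exp (σ * Complex.I) + (starRingEnd ℂ) (z 3)‖ +
  ‖z 1 * Complex.exp (σ * Complex.I) + (starRingEnd ℂ) (z 2)‖

noncomputable def Xnorm (z : Fin 4 → ℂ) : ℝ := ⨆ σ : ℝ, Xfun z σ

noncomputable def phase (z : Fin 4 → ℂ) : ℝ :=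
  (Complex.arg (z 0) + Complex.arg (z 3)) - (Complex.arg (z 1) + Complex.arg (z 2))

lemma conj_eq (b : ℂ) : (starRingEnd ℂ) b = (‖b‖ : ℂ) * Complex.exp (-(b.arg : ℂ) * Complex.I) := by
  conv_lhs => rw [← Complex.norm_mul_exp_arg_mul_I b]
  rw [map_mul, ← Complex.exp_conj]
  congr 1
  · simp [Complex.conj_ofReal]
  · congr 1
    simp [Complex.conj_ofReal]

lemma align (a b : ℂ) : ∃ σ : ℝ, ‖a * Complex.exp (σ * Complex.I) + (starRingEnd ℂ) b‖ = ‖a‖ + ‖b‖ := by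
  refine ⟨-(a.arg + b.arg), ?_⟩
  set s := a.arg with hs
  set t := b.arg with ht
  have key : a * Complex.exp ((-(s + t) : ℝ) * Complex.I) + (starRingEnd ℂ) b
      = ((‖a‖ + ‖b‖ : ℝ) : ℂ) * Complex.exp (-(t : ℂ) * Complex.I) := by
    conv_lhs => rw [← Complex.norm_mul_exp_arg_mul_I a, ← hs, conj_eq b, ← ht]
    rw [mul_assoc, ← Complex.exp_add]
    push_cast
    ring_nf
  rw [key, norm_mul, Complex.norm_real]
  have h1 : ‖Complex.exp (-(t : ℂ) * Complex.I)‖ = 1 := by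
    rw [show (-(t : ℂ)) = ((-t : ℝ) : ℂ) by push_cast; ring]
    exact Complex.norm_exp_ofReal_mul_I _
  rw [h1, mul_one, Real.norm_of_nonneg (by positivity)]

lemma lb (c d : ℂ) (σ : ℝ) :
    ‖c‖ - ‖d‖ ≤ ‖c * Complex.exp (σ * Complex.I) + (starRingEnd ℂ) d‖ ∧
    ‖d‖ - ‖c‖ ≤ ‖c * Complex.exp (σ * Complex.I) + (starRingEnd ℂ) d‖ := by
  have h1 : ‖c * Complex.exp (σ * Complex.I)‖ = ‖c‖ := by
    rw [norm_mul, Complex.norm_exp_ofReal_mul_I, mul_one]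
  have h2 : ‖(starRingEnd ℂ) d‖ = ‖d‖ := Complex.norm_conj d
  set u := c * Complex.exp (σ * Complex.I)
  set v := (starRingEnd ℂ) d
  have hu : ‖u‖ ≤ ‖u + v‖ + ‖v‖ := by
    calc ‖u‖ = ‖(u + v) + (-v)‖ := by ring_nf
    _ ≤ ‖u + v‖ + ‖-v‖ := norm_add_le _ _
    _ = ‖u + v‖ + ‖v‖ := by rw [norm_neg]
  have hv : ‖v‖ ≤ ‖u + v‖ + ‖u‖ := by
    calc ‖v‖ = ‖(u + v) + (-u)‖ := by ring_nf
    _ ≤ ‖u + v‖ + ‖-u‖ := norm_add_le _ _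
    _ = ‖u + v‖ + ‖u‖ := by rw [norm_neg]
  constructor <;> [linarith [hu, h1, h2]; linarith [hv, h1, h2]]

theorem stmt_19 (z : Fin 4 → ℂ) :
    (∑ i : Fin 4, ‖z i‖) -
        2 * (Finset.univ.inf' Finset.univ_nonempty fun j => ‖z j‖) ≤
      Xnorm z := by
  have hbdd : BddAbove (Set.range (Xfun z)) := by
    refine ⟨‖z 0‖ + ‖z 3‖ + (‖z 1‖ + ‖z 2‖), ?_⟩
    rintro _ ⟨σ, rfl⟩
    unfold Xfun
    have h1 : ‖z 0 * Complex.exp (σ * Complex.I)‖ = ‖z 0‖ := by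
      rw [norm_mul, Complex.norm_exp_ofReal_mul_I, mul_one]
    have h2 : ‖z 1 * Complex.exp (σ * Complex.I)‖ = ‖z 1‖ := by
      rw [norm_mul, Complex.norm_exp_ofReal_mul_I, mul_one]
    have := norm_add_le (z 0 * Complex.exp (σ * Complex.I)) ((starRingEnd ℂ) (z 3))
    have := norm_add_le (z 1 * Complex.exp (σ * Complex.I)) ((starRingEnd ℂ) (z 2))
    have := Complex.norm_conj (z 3)
    have := Complex.norm_conj (z 2)
    linarith
  have hsup : ∀ σ, Xfun z σ ≤ Xnorm z := fun σ => le_ciSup hbdd σ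
  obtain ⟨j, _, hj⟩ := Finset.exists_mem_eq_inf' Finset.univ_nonempty (fun j => ‖z j‖)
  rw [hj, Fin.sum_univ_four]
  fin_cases j
  · obtain ⟨σ, hσ⟩ := align (z 1) (z 2)
    have h := hsup σ
    unfold Xfun at h
    have := (lb (z 0) (z 3) σ).2
    simp only [Fin.isValue, Fin.reduceFinMk] at hj ⊢
    linarith
  · obtain ⟨σ, hσ⟩ := align (z 0) (z 3)
    have h := hsup σ
    unfold Xfun at h
    have := (lb (z 1) (z 2) σ).2
    simp only [Fin.isValue, Fin.reduceFinMk] at hj ⊢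
    linarith
  · obtain ⟨σ, hσ⟩ := align (z 0) (z 3)
    have h := hsup σ
    unfold Xfun at h
    have := (lb (z 1) (z 2) σ).1
    simp only [Fin.isValue, Fin.reduceFinMk] at hj ⊢
    linarith
  · obtain ⟨σ, hσ⟩ := align (z 1) (z 2)
    have h := hsup σ
    unfold Xfun at h
    have := (lb (z 0) (z 3) σ).1
    simp only [Fin.isValue, Fin.reduceFinMk] at hj ⊢
    linarith
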